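/- Let f = (P,Q) : ℂ² → ℂ² with J(P,Q) a nonzero constant. If the non-proper value set A_f is non-empty, then deg P > 1 and deg Q > 1. -/

import Mathlib

open MvPolynomial

lemma my_coeff_pderiv (i : Fin 2) (m : Fin 2 →₀ ℕ) (p : MvPolynomial (Fin 2) ℂ) :
    coeff m (pderiv i p) = (m i + 1 : ℕ) * coeff (m + Finsupp.single i 1) p := by
  induction p using MvPolynomial.induction_on' with
  | monomial s a =>
    rw [pderiv_monomial, coeff_monomial, coeff_monomial]
    by_cases h : s = m + Finsupp.single i 1
    · subst h
      rw [if_pos, if_pos rfl]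
      · push_cast; ring_nf
        simp [Finsupp.add_apply, Finsupp.single_apply]
        ring
      · ext j
        simp [Finsupp.tsub_apply, Finsupp.add_apply, Finsupp.single_apply]
    · rw [if_neg h]
      by_cases h2 : s - Finsupp.single i 1 = m
      · rw [if_pos h2]
        have hsi : s i = 0 := by
          by_contra hsi
          apply h
          ext j
          by_cases hj : j = i
          · subst hj
            have := DFunLike.congr_fun h2 j
            simp [Finsupp.tsub_apply, Finsupp.single_apply] at this ⊢
            omega
          · have := DFunLike.congr_fun h2 j
            simp [Finsupp.tsub_apply, Finsupp.single_apply, hj, Ne.symm hj] at this ⊢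
            omega
        simp [hsi]
      · rw [if_neg h2, mul_zero]
  | add p q hp hq => simp [hp, hq, mul_add]

lemma coeff_zero_of_pderiv_zero {p : MvPolynomial (Fin 2) ℂ} {i : Fin 2}
    (hp : pderiv i p = 0) {m : Fin 2 →₀ ℕ} (hm : m i ≠ 0) : coeff m p = 0 := by
  set m' := m - Finsupp.single i 1 with hm'def
  have h := my_coeff_pderiv i m' p
  have hmm : m' + Finsupp.single i 1 = m := by
    rw [hm'def]
    ext j
    by_cases hj : j = i
    · subst hj
      simp [Finsupp.tsub_apply, Finsupp.add_apply, Finsupp.single_apply]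
      omega
    · simp [Finsupp.tsub_apply, Finsupp.add_apply, Finsupp.single_apply, Ne.symm hj]
  rw [hmm, hp] at h
  simp only [map_zero, coeff_zero] at h
  rcases mul_eq_zero.mp h.symm with h3 | h3
  · exact absurd h3 (Nat.cast_ne_zero.mpr (Nat.succ_ne_zero _))
  · exact h3

lemma eval_indep {p : MvPolynomial (Fin 2) ℂ} {i : Fin 2} (hp : pderiv i p = 0)
    (v w : Fin 2 → ℂ) (hvw : ∀ j, j ≠ i → v j = w j) : eval v p = eval w p := by
  rw [eval_eq', eval_eq']
  apply Finset.sum_congr rfl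
  intro m hm
  rw [mem_support_iff] at hm
  have hmi : m i = 0 := by
    by_contra h
    exact hm (coeff_zero_of_pderiv_zero hp h)
  congr 1
  apply Finset.prod_congr rfl
  intro j _
  by_cases hj : j = i
  · subst hj; rw [hmi]; simp
  · rw [hvw j hj]

lemma eval_const_of_pderivs {p : MvPolynomial (Fin 2) ℂ}
    (h0 : pderiv 0 p = 0) (h1 : pderiv 1 p = 0) (v w : Fin 2 → ℂ) :
    eval v p = eval w p := by
  have s1 : eval v p = eval ![v 0, w 1] p := by
    apply eval_indep h1
    intro j hj
    fin_cases j
    · simp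
    · simp at hj
  have s2 : eval ![v 0, w 1] p = eval w p := by
    apply eval_indep h0
    intro j hj
    fin_cases j
    · simp at hj
    · simp
  rw [s1, s2]

lemma sum_support_eq (m : Fin 2 →₀ ℕ) : ∑ j ∈ m.support, m j = m 0 + m 1 := by
  rw [Finset.sum_subset (Finset.subset_univ m.support)
    (by intro x _ hx; simpa using Finsupp.notMem_support_iff.mp hx)]
  exact Fin.sum_univ_two m

lemma eq_C_of_coeff {q : MvPolynomial (Fin 2) ℂ}
    (h : ∀ m : Fin 2 →₀ ℕ, m ≠ 0 → coeff m q = 0) : q = C (coeff 0 q) := by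
  ext m
  rw [coeff_C]
  by_cases hm : m = 0
  · subst hm; simp
  · rw [if_neg (by exact fun h' => hm h'.symm), h m hm]

lemma pderiv_eq_C_of_deg_le_one {p : MvPolynomial (Fin 2) ℂ} (hdeg : p.totalDegree ≤ 1)
    (i : Fin 2) : pderiv i p = C (coeff 0 (pderiv i p)) := by
  apply eq_C_of_coeff
  intro m hm
  rw [my_coeff_pderiv]
  have : coeff (m + Finsupp.single i 1) p = 0 := by
    apply coeff_eq_zero_of_totalDegree_lt
    rw [sum_support_eq]
    simp only [Finsupp.add_apply]
    have h01 : 1 ≤ m 0 + m 1 := by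
      by_contra h
      push_neg at h
      apply hm
      ext j
      fin_cases j <;> simp <;> omega
    fin_cases i <;> simp [Finsupp.single_apply] <;> omega
  rw [this, mul_zero]

lemma my_pderiv_bind₁ (g : Fin 2 → MvPolynomial (Fin 2) ℂ) (j : Fin 2)
    (p : MvPolynomial (Fin 2) ℂ) :
    pderiv j (bind₁ g p) =
      bind₁ g (pderiv 0 p) * pderiv j (g 0) + bind₁ g (pderiv 1 p) * pderiv j (g 1) := by
  induction p using MvPolynomial.induction_on with
  | C a => simp
  | add p q hp hq => simp only [map_add, hp, hq]; ring
  | mul_X p i hp =>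
    simp only [map_mul, bind₁_X_right, pderiv_mul, hp]
    fin_cases i <;> simp <;> ring

lemma my_eval_bind₁ (f : Fin 2 → ℂ) (g : Fin 2 → MvPolynomial (Fin 2) ℂ)
    (p : MvPolynomial (Fin 2) ℂ) :
    eval f (bind₁ g p) = eval (fun i => eval f (g i)) p := by
  simpa using eval₂Hom_bind₁ (RingHom.id ℂ) f g p

lemma core (P Q : MvPolynomial (Fin 2) ℂ) (c b d : ℂ) (hc : c ≠ 0) (hb : b ≠ 0)
    (h0 : pderiv 0 P = C b) (h1 : pderiv 1 P = C d)
    (hJ : pderiv 0 P * pderiv 1 Q - pderiv 1 P * pderiv 0 Q = C c)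
    (K : Set (ℂ × ℂ)) (hK : IsCompact K) :
    IsCompact ((fun z : ℂ × ℂ => (eval ![z.1, z.2] P, eval ![z.1, z.2] Q)) ⁻¹' K) := by
  set a : ℂ := eval ![0, 0] P with ha
  -- P evaluates linearly
  have evalP : ∀ x y : ℂ, eval ![x, y] P = a + b * x + d * y := by
    intro x y
    set D : MvPolynomial (Fin 2) ℂ := P - C b * X 0 - C d * X 1 with hD
    have hD0 : pderiv 0 D = 0 := by
      simp [hD, h0, pderiv_C_mul]
    have hD1 : pderiv 1 D = 0 := by
      simp [hD, h1, pderiv_C_mul]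
    have := eval_const_of_pderivs hD0 hD1 ![x, y] ![0, 0]
    simp only [hD, map_sub, eval_mul, eval_C, eval_X] at this
    simp only [Matrix.cons_val_zero, Matrix.cons_val_one, Matrix.head_cons] at this
    rw [← ha] at this
    ring_nf at this ⊢
    linear_combination this
  -- the substitution
  set g : Fin 2 → MvPolynomial (Fin 2) ℂ :=
    ![C b⁻¹ * (X 0 - C a - C d * X 1), X 1] with hg
  set G : MvPolynomial (Fin 2) ℂ := bind₁ g Q with hGdef
  have hJ' : C b * pderiv 1 Q - C d * pderiv 0 Q = (C c : MvPolynomial (Fin 2) ℂ) := by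
    rw [h0, h1] at hJ; exact hJ
  have hbC : (C b : MvPolynomial (Fin 2) ℂ) ≠ 0 := by
    simpa using hb
  have key : pderiv 1 Q - C (b⁻¹ * d) * pderiv 0 Q = (C (b⁻¹ * c) : MvPolynomial (Fin 2) ℂ) := by
    apply mul_left_cancel₀ hbC
    have e1 : b * (b⁻¹ * d) = d := by field_simp
    have e2 : b * (b⁻¹ * c) = c := by field_simp
    have e3 : (C b : MvPolynomial (Fin 2) ℂ) * C (b⁻¹ * d) = C d := by rw [← C_mul, e1]
    have e4 : (C b : MvPolynomial (Fin 2) ℂ) * C (b⁻¹ * c) = C c := by rw [← C_mul, e2]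
    calc C b * (pderiv 1 Q - C (b⁻¹ * d) * pderiv 0 Q)
        = C b * pderiv 1 Q - C b * C (b⁻¹ * d) * pderiv 0 Q := by ring
      _ = C b * pderiv 1 Q - C d * pderiv 0 Q := by rw [e3]
      _ = C c := hJ'
      _ = C b * C (b⁻¹ * c) := by rw [e4]
  have hG1 : pderiv 1 G = C (b⁻¹ * c) := by
    rw [hGdef, my_pderiv_bind₁]
    have hg0 : pderiv 1 (g 0) = -(C (b⁻¹ * d)) := by
      simp [hg, pderiv_C_mul, C_mul]
    have hg1 : pderiv 1 (g 1) = 1 := by simp [hg]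
    rw [hg0, hg1, mul_one]
    have : bind₁ g (pderiv 1 Q - C (b⁻¹ * d) * pderiv 0 Q) = C (b⁻¹ * c) := by
      rw [key, bind₁_C_right]
    rw [map_sub, map_mul, bind₁_C_right] at this
    linear_combination this
  set H : MvPolynomial (Fin 2) ℂ := G - C (b⁻¹ * c) * X 1 with hHdef
  have hH1 : pderiv 1 H = 0 := by
    simp [hHdef, hG1, pderiv_C_mul]
  set h : ℂ → ℂ := fun u => eval ![u, 0] H with hh
  -- key identity for Q
  have keyQ : ∀ x y : ℂ, eval ![x, y] Q = b⁻¹ * c * y + h (eval ![x, y] P) := by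
    intro x y
    set u : ℂ := eval ![x, y] P with hu
    have e1 : eval ![u, y] G = eval ![x, y] Q := by
      rw [hGdef, my_eval_bind₁]
      have hfun : (fun i => eval ![u, y] (g i)) = ![x, y] := by
        funext i
        fin_cases i
        · show eval ![u, y] (g 0) = x
          rw [hg]
          simp only [Matrix.cons_val_zero, eval_mul, eval_C, map_sub, eval_X,
            Matrix.cons_val_one, Matrix.head_cons]
          have : u = a + b * x + d * y := by rw [hu, evalP]
          rw [this]
          field_simp
          ring
        · show eval ![u, y] (g 1) = y
          rw [hg]
          simp
      rw [hfun]
    have e2 : eval ![u, y] H = h u := by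
      apply eval_indep hH1
      intro j hj
      fin_cases j
      · simp
      · simp at hj
    have e3 : eval ![u, y] H = eval ![u, y] G - b⁻¹ * c * y := by
      simp [hHdef]
    rw [e1] at e3
    rw [e2] at e3
    linear_combination -e3
  -- the continuous inverse
  have hcb : b⁻¹ * c ≠ 0 := by
    simp [hb, hc]
  have hhcont : Continuous h := by
    have hvec : Continuous fun u : ℂ => ![u, (0 : ℂ)] := by
      apply continuous_pi
      intro i
      fin_cases i
      · simpa using continuous_id'
      · simpa using continuous_const
    have hev : Continuous fun v : Fin 2 → ℂ => eval v H := MvPolynomial.continuous_eval H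
    exact hev.comp hvec
  set Y : ℂ × ℂ → ℂ := fun w => (b⁻¹ * c)⁻¹ * (w.2 - h w.1) with hY
  have hYcont : Continuous Y :=
    continuous_const.mul (continuous_snd.sub (hhcont.comp continuous_fst))
  set gmap : ℂ × ℂ → ℂ × ℂ := fun w => (b⁻¹ * (w.1 - a - d * Y w), Y w) with hgmap
  have hgmapcont : Continuous gmap :=
    (continuous_const.mul ((continuous_fst.sub continuous_const).sub
      (continuous_const.mul hYcont))).prodMk hYcont
  set f : ℂ × ℂ → ℂ × ℂ :=
    fun z : ℂ × ℂ => (eval ![z.1, z.2] P, eval ![z.1, z.2] Q) with hf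
  have hfcont : Continuous f := by
    have hvec : Continuous fun z : ℂ × ℂ => ![z.1, z.2] := by
      apply continuous_pi
      intro i
      fin_cases i
      · simpa using continuous_fst
      · simpa using continuous_snd
    exact ((MvPolynomial.continuous_eval P).comp hvec).prodMk
      ((MvPolynomial.continuous_eval Q).comp hvec)
  have hleft : ∀ z : ℂ × ℂ, gmap (f z) = z := by
    intro z
    have hQz := keyQ z.1 z.2
    have hPz := evalP z.1 z.2
    have hY2 : Y (f z) = z.2 := by
      simp only [hY, hf, hQz]
      field_simp
      ring
    apply Prod.ext
    · show b⁻¹ * ((f z).1 - a - d * Y (f z)) = z.1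
      rw [hY2]
      have hfz1 : (f z).1 = a + b * z.1 + d * z.2 := hPz
      rw [hfz1]
      field_simp
      ring
    · exact hY2
  have hsub : f ⁻¹' K ⊆ gmap '' K := by
    intro z hz
    exact ⟨f z, hz, hleft z⟩
  exact IsCompact.of_isClosed_subset (hK.image hgmapcont) (hK.isClosed.preimage hfcont) hsub

lemma side (P Q : MvPolynomial (Fin 2) ℂ) (c : ℂ) (hc : c ≠ 0)
    (hJ : pderiv 0 P * pderiv 1 Q - pderiv 1 P * pderiv 0 Q = C c)
    (hdeg : P.totalDegree ≤ 1) (K : Set (ℂ × ℂ)) (hK : IsCompact K) :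
    IsCompact ((fun z : ℂ × ℂ => (eval ![z.1, z.2] P, eval ![z.1, z.2] Q)) ⁻¹' K) := by
  have h0 : pderiv 0 P = C (coeff 0 (pderiv 0 P)) := pderiv_eq_C_of_deg_le_one hdeg 0
  have h1 : pderiv 1 P = C (coeff 0 (pderiv 1 P)) := pderiv_eq_C_of_deg_le_one hdeg 1
  set b := coeff 0 (pderiv 0 P) with hbdef
  set d := coeff 0 (pderiv 1 P) with hddef
  by_cases hb : b ≠ 0
  · exact core P Q c b d hc hb h0 h1 hJ K hK
  push_neg at hb
  have hd : d ≠ 0 := by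
    intro hd0
    rw [h0, h1, hb, hd0] at hJ
    simp only [map_zero, zero_mul, sub_zero, mul_zero, zero_sub, neg_zero] at hJ
    exact hc (by simpa using hJ.symm)
  -- swap the two variables
  set e : Fin 2 ≃ Fin 2 := Equiv.swap 0 1 with he
  set P' : MvPolynomial (Fin 2) ℂ := rename e P with hP'
  set Q' : MvPolynomial (Fin 2) ℂ := rename e Q with hQ'
  have he0 : e 0 = 1 := Equiv.swap_apply_left 0 1
  have he1 : e 1 = 0 := Equiv.swap_apply_right 0 1
  have rP0 : pderiv 0 P' = rename e (pderiv 1 P) := by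
    rw [hP', ← he1, pderiv_rename e.injective]
  have rP1 : pderiv 1 P' = rename e (pderiv 0 P) := by
    rw [hP', ← he0, pderiv_rename e.injective]
  have rQ0 : pderiv 0 Q' = rename e (pderiv 1 Q) := by
    rw [hQ', ← he1, pderiv_rename e.injective]
  have rQ1 : pderiv 1 Q' = rename e (pderiv 0 Q) := by
    rw [hQ', ← he0, pderiv_rename e.injective]
  have hP'0 : pderiv 0 P' = C d := by rw [rP0, h1, rename_C]
  have hP'1 : pderiv 1 P' = C b := by rw [rP1, h0, rename_C]
  have hJ' : pderiv 0 P' * pderiv 1 Q' - pderiv 1 P' * pderiv 0 Q' = C (-c) := by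
    rw [rP0, rP1, rQ0, rQ1, ← map_mul, ← map_mul, ← map_sub]
    have : pderiv 1 P * pderiv 0 Q - pderiv 0 P * pderiv 1 Q = C (-c) := by
      have hCc : (C (-c) : MvPolynomial (Fin 2) ℂ) = - C c := by simp
      rw [hCc]
      linear_combination -hJ
    rw [this, rename_C]
  have hcomp := core P' Q' (-c) d b (neg_ne_zero.mpr hc) hd hP'0 hP'1 hJ' K hK
  -- relate the two preimages via the swap homeomorphism
  have hevalP : ∀ z : ℂ × ℂ, eval ![z.1, z.2] P' = eval ![z.2, z.1] P := by
    intro z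
    rw [hP', eval_rename]
    have hv : (![z.1, z.2] ∘ ⇑e) = ![z.2, z.1] := by
      funext i
      fin_cases i <;> simp [he]
    rw [hv]
  have hevalQ : ∀ z : ℂ × ℂ, eval ![z.1, z.2] Q' = eval ![z.2, z.1] Q := by
    intro z
    rw [hQ', eval_rename]
    have hv : (![z.1, z.2] ∘ ⇑e) = ![z.2, z.1] := by
      funext i
      fin_cases i <;> simp [he]
    rw [hv]
  have hseteq : ((fun z : ℂ × ℂ => (eval ![z.1, z.2] P, eval ![z.1, z.2] Q)) ⁻¹' K)
      = Prod.swap ⁻¹' ((fun z : ℂ × ℂ => (eval ![z.1, z.2] P', eval ![z.1, z.2] Q')) ⁻¹' K) := by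
    ext z
    simp only [Set.mem_preimage, hevalP, hevalQ, Prod.swap]
  rw [hseteq]
  exact ((Homeomorph.prodComm ℂ ℂ).isCompact_preimage).mpr hcomp

theorem stmt_17 (P Q : MvPolynomial (Fin 2) ℂ) (c : ℂ) (hc : c ≠ 0)
    (hJ : pderiv 0 P * pderiv 1 Q - pderiv 1 P * pderiv 0 Q = C c)
    (hne : {a : ℂ × ℂ | ∀ K : Set (ℂ × ℂ), IsCompact K → K ∈ nhds a →
      ¬ IsCompact ((fun z : ℂ × ℂ =>
        (eval ![z.1, z.2] P, eval ![z.1, z.2] Q)) ⁻¹' K)}.Nonempty) :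
    1 < P.totalDegree ∧ 1 < Q.totalDegree := by
  obtain ⟨a, ha⟩ := hne
  have key : ¬ (∀ K : Set (ℂ × ℂ), IsCompact K →
      IsCompact ((fun z : ℂ × ℂ => (eval ![z.1, z.2] P, eval ![z.1, z.2] Q)) ⁻¹' K)) := by
    intro hall
    exact ha (Metric.closedBall a 1) (isCompact_closedBall a 1)
      (Metric.closedBall_mem_nhds a one_pos) (hall _ (isCompact_closedBall a 1))
  constructor
  · by_contra hP
    push_neg at hP
    exact key (side P Q c hc hJ hP)
  · by_contra hQ
    push_neg at hQ
    apply key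
    intro K hK
    have hJ2 : pderiv 0 Q * pderiv 1 P - pderiv 1 Q * pderiv 0 P = C (-c) := by
      have hCc : (C (-c) : MvPolynomial (Fin 2) ℂ) = - C c := by simp
      rw [hCc]
      linear_combination -hJ
    have hKs : IsCompact (Prod.swap ⁻¹' K : Set (ℂ × ℂ)) :=
      ((Homeomorph.prodComm ℂ ℂ).isCompact_preimage).mpr hK
    have h2 := side Q P (-c) (neg_ne_zero.mpr hc) hJ2 hQ (Prod.swap ⁻¹' K) hKs
    have hseteq : ((fun z : ℂ × ℂ => (eval ![z.1, z.2] P, eval ![z.1, z.2] Q)) ⁻¹' K)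
        = ((fun z : ℂ × ℂ => (eval ![z.1, z.2] Q, eval ![z.1, z.2] P)) ⁻¹' (Prod.swap ⁻¹' K)) := by
      ext z
      simp [Set.mem_preimage, Prod.swap]
    rw [hseteq]
    exact h2
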